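/- For every integer n ≥ 1, every p ∈ [0,1], every υ_0, …, υ_{n−1} ∈ (0,1) (with the convention υ_n = 1), and all real u_0, u_1, …, u_n ∈ [0,1), one has 0 ≤ Q_n(u_0,…,u_n) < 1, the series Σ_{x_0 ≥ 1} Σ_{(y_1,…,y_n) ∈ ℕ^n} L(x_0, y_1, …, y_n) · u_0^{x_0} u_1^{y_1} ⋯ u_n^{y_n} converges, and its sum equals u_0 υ_0 υ_1 ⋯ υ_{n−1} (p u_1 + q)(p u_2 + q) ⋯ (p u_n + q) / (1 − Q_n(u_0,…,u_n)). -/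

import Mathlib

open scoped BigOperators

noncomputable section

/-- Binomial coefficient `C(m,k)` for integers, with the convention that it is `0`
when `k < 0` or `k > m`. -/
def ichoose (m k : ℤ) : ℝ := if 0 ≤ k ∧ k ≤ m then ((m.toNat).choose k.toNat : ℝ) else 0

/-- The previous population size: `prevx x0 xs i` is `x0` if `i = 0` and `xs (i-1)` otherwise. -/
def prevx (x0 : ℕ) (xs : ℕ → ℕ) (i : ℕ) : ℕ := if i = 0 then x0 else xs (i - 1)

/-- Extension of a tuple `f : Fin n → ℕ` to all of `ℕ`, with default value `d` beyond `n`. -/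
def extFin (n : ℕ) (f : Fin n → ℕ) (d : ℕ) : ℕ → ℕ := fun i => if h : i < n then f ⟨i, h⟩ else d

/-- Extension of a positive tuple of population sizes to all of `ℕ`. -/
def xbar (n : ℕ) (x : Fin n → ℕ+) : ℕ → ℕ := extFin n (fun j => (x j : ℕ)) 1

/-- The summand of the POPBP likelihood: for hidden trajectory `xs = (x_1, …, x_n)`
(indexed here by `i ∈ {0, …, n-1}`, so `xs i = x_{i+1}`), data `y = (y_1, …, y_n)`
(again `y i = y_{i+1}`), initial population `x0`, detection probability `p` and
transition parameters `υ = (υ_0, …, υ_{n-1})`, this is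
`∏_{i=1}^{n} C(x_i, y_i) p^{y_i} q^{x_i - y_i} C(x_i - 1, x_{i-1} - 1) υ_{i-1}^{x_{i-1}} (1-υ_{i-1})^{x_i - x_{i-1}}`. -/
def popbpTerm (n : ℕ) (p : ℝ) (υ : ℕ → ℝ) (x0 : ℕ) (y : ℕ → ℕ) (xs : ℕ → ℕ) : ℝ :=
  ∏ i ∈ Finset.range n,
    (ichoose (xs i) (y i) * p ^ (y i) * (1 - p) ^ (xs i - y i) *
      ichoose ((xs i : ℤ) - 1) ((prevx x0 xs i : ℤ) - 1) *
      υ i ^ (prevx x0 xs i) * (1 - υ i) ^ (xs i - prevx x0 xs i))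

/-- The POPBP likelihood `L(x_0, y_1, …, y_n)`: the sum over hidden trajectories
`(x_1, …, x_n) ∈ (ℕ∖{0})^n` of `popbpTerm`. -/
def popbpL (n : ℕ) (p : ℝ) (υ : ℕ → ℝ) (x0 : ℕ) (y : Fin n → ℕ) : ℝ :=
  ∑' x : Fin n → ℕ+, popbpTerm n p υ x0 (extFin n y 0) (xbar n x)

/-- Evaluation of the polynomials `Q_i`: `Q_0 = (1 - υ_0) + υ_0 u_0` and
`Q_i = (1 - υ_i) + υ_i (p u_i + q) Q_{i-1}`. -/
def Qeval (p : ℝ) (υ : ℕ → ℝ) (u : ℕ → ℝ) : ℕ → ℝ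
  | 0 => (1 - υ 0) + υ 0 * u 0
  | (i + 1) => (1 - υ (i + 1)) + υ (i + 1) * (p * u (i + 1) + (1 - p)) * Qeval p υ u i

open scoped ENNReal NNReal

namespace POPBP

lemma ichoose_nonneg (m k : ℤ) : 0 ≤ ichoose m k := by
  unfold ichoose; split <;> positivity

lemma ichoose_nat (b yv : ℕ) : ichoose (b : ℤ) (yv : ℤ) = if yv ≤ b then (b.choose yv : ℝ) else 0 := by
  unfold ichoose
  by_cases h : yv ≤ b
  · rw [if_pos ⟨Int.natCast_nonneg yv, by exact_mod_cast h⟩, if_pos h]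
    simp
  · rw [if_neg, if_neg h]
    push_neg
    intro _
    exact_mod_cast lt_of_not_ge h

lemma hasSum_binom (b : ℕ) (a c : ℝ) :
    HasSum (fun yv : ℕ => ichoose (b : ℤ) (yv : ℤ) * a ^ yv * c ^ (b - yv)) ((a + c) ^ b) := by
  have h0 : ∀ yv ∉ Finset.range (b + 1),
      ichoose (b : ℤ) (yv : ℤ) * a ^ yv * c ^ (b - yv) = 0 := by
    intro yv hyv
    rw [Finset.mem_range, not_lt] at hyv
    rw [ichoose_nat, if_neg (by omega), zero_mul, zero_mul]
  have h := hasSum_sum_of_ne_finset_zero (L := SummationFilter.unconditional ℕ) h0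
  convert h using 1
  rw [add_pow]
  refine Finset.sum_congr rfl fun yv hyv => ?_
  rw [Finset.mem_range] at hyv
  rw [ichoose_nat, if_pos (by omega)]
  ring

lemma ichoose_vanish (b m : ℕ) (hb : b < m) :
    ichoose ((b : ℤ) - 1) ((m : ℤ) - 1) = 0 := by
  unfold ichoose
  rw [if_neg]
  rintro ⟨h1, h2⟩
  omega

lemma ichoose_shift (l m : ℕ) (hm : 1 ≤ m) :
    ichoose (((l + m : ℕ) : ℤ) - 1) ((m : ℤ) - 1) = (((l + (m - 1)).choose (m - 1) : ℕ) : ℝ) := by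
  have e1 : ((l + m : ℕ) : ℤ) - 1 = ((l + (m - 1) : ℕ) : ℤ) := by push_cast; omega
  have e2 : ((m : ℤ)) - 1 = (((m - 1 : ℕ)) : ℤ) := by push_cast; omega
  rw [e1, e2]
  unfold ichoose
  rw [if_pos ⟨Int.natCast_nonneg _, by exact_mod_cast Nat.le_add_left _ _⟩]
  norm_cast

lemma hasSum_negbinom (m : ℕ) (hm : 1 ≤ m) {β c : ℝ} (hβ : 0 ≤ β) (hc : 0 ≤ c)
    (h1 : β * c < 1) :
    HasSum (fun b : ℕ => ichoose ((b : ℤ) - 1) ((m : ℤ) - 1) * c ^ b * β ^ (b - m))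
      ((c / (1 - β * c)) ^ m) := by
  set f : ℕ → ℝ := fun b => ichoose ((b : ℤ) - 1) ((m : ℤ) - 1) * c ^ b * β ^ (b - m) with hf
  have hnorm : ‖β * c‖ < 1 := by
    rw [Real.norm_eq_abs, abs_of_nonneg (mul_nonneg hβ hc)]; exact h1
  have key := (hasSum_choose_mul_geometric_of_norm_lt_one (𝕜 := ℝ) (m - 1) hnorm).mul_left (c ^ m)
  have heq : (fun l : ℕ => c ^ m * ((((l + (m - 1)).choose (m - 1) : ℕ) : ℝ) * (β * c) ^ l))
      = fun l : ℕ => f (l + m) := by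
    funext l
    rw [hf]
    simp only []
    rw [ichoose_shift l m hm, show (l + m) - m = l by omega, pow_add, mul_pow]
    ring
  rw [heq] at key
  have hz : ∑ i ∈ Finset.range m, f i = 0 := by
    refine Finset.sum_eq_zero fun i hi => ?_
    rw [Finset.mem_range] at hi
    rw [hf]; simp only []
    rw [ichoose_vanish i m hi, zero_mul, zero_mul]
  have key2 := (hasSum_nat_add_iff (f := f) m).mp key
  rw [hz, add_zero] at key2
  have hv : c ^ m * (1 / (1 - β * c) ^ (m - 1 + 1)) = (c / (1 - β * c)) ^ m := by
    rw [show m - 1 + 1 = m by omega, div_pow]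
    ring
  rwa [hv] at key2

lemma hasSum_geom_succ {w : ℝ} (h0 : 0 ≤ w) (h1 : w < 1) :
    HasSum (fun j : ℕ => w ^ (j + 1)) (w / (1 - w)) := by
  have := (hasSum_geometric_of_lt_one h0 h1).mul_left w
  have heq : (fun j : ℕ => w * w ^ j) = fun j : ℕ => w ^ (j + 1) := by
    funext j; rw [pow_succ]; ring
  rw [heq] at this
  rwa [div_eq_mul_inv]

end POPBP

namespace POPBP

def tp (p : ℝ) (u : ℕ → ℝ) (i : ℕ) : ℝ := p * u i + (1 - p)

def S (p : ℝ) (υ u : ℕ → ℝ) (n : ℕ) : ℕ → ℝ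
  | 0 => 1
  | k + 1 => υ (n - k - 1) * tp p u (n - k) * S p υ u n k /
      (1 - (1 - υ (n - k - 1)) * tp p u (n - k) * S p υ u n k)

def B (p : ℝ) (υ u : ℕ → ℝ) : ℕ → ℝ
  | 0 => u 0
  | k + 1 => tp p u (k + 1) * ((1 - υ k) + υ k * B p υ u k)

def step (p : ℝ) (υ u : ℕ → ℝ) (i a b yv : ℕ) : ℝ :=
  ichoose (b : ℤ) (yv : ℤ) * p ^ yv * (1 - p) ^ (b - yv) *
    ichoose ((b : ℤ) - 1) ((a : ℤ) - 1) * υ i ^ a * (1 - υ i) ^ (b - a) * u (i + 1) ^ yv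

def tailE (p : ℝ) (υ u : ℕ → ℝ) (n k m : ℕ) : ℝ≥0∞ :=
  ∑' w : (Fin k → ℕ+) × (Fin k → ℕ),
    ENNReal.ofReal (∏ r ∈ Finset.range k,
      step p υ u (n - k + r) (prevx m (xbar k w.1) r) (xbar k w.1 r) (extFin k w.2 0 r))

def splitEquiv (k : ℕ) :
    ((ℕ+ × ℕ) × ((Fin k → ℕ+) × (Fin k → ℕ))) ≃ ((Fin (k + 1) → ℕ+) × (Fin (k + 1) → ℕ)) where
  toFun z := (Fin.cons z.1.1 z.2.1, Fin.cons z.1.2 z.2.2)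
  invFun w := ((w.1 0, w.2 0), (Fin.tail w.1, Fin.tail w.2))
  left_inv := by rintro ⟨⟨b, yv⟩, ⟨x, y⟩⟩; simp [Fin.tail_cons]
  right_inv := by rintro ⟨x, y⟩; simp [Fin.cons_self_tail]

lemma extFin_cons_zero (k : ℕ) (a : ℕ) (y : Fin k → ℕ) (d : ℕ) :
    extFin (k + 1) (Fin.cons a y) d 0 = a := by
  unfold extFin
  rw [dif_pos (Nat.succ_pos k)]
  rfl

lemma extFin_cons_succ (k : ℕ) (a : ℕ) (y : Fin k → ℕ) (d r : ℕ) :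
    extFin (k + 1) (Fin.cons a y) d (r + 1) = extFin k y d r := by
  unfold extFin
  by_cases h : r < k
  · rw [dif_pos (by omega), dif_pos h]
    exact Fin.cons_succ (α := fun _ => ℕ) a y ⟨r, h⟩
  · rw [dif_neg (by omega), dif_neg h]

lemma xbar_cons_zero (k : ℕ) (b : ℕ+) (x : Fin k → ℕ+) :
    xbar (k + 1) (Fin.cons b x) 0 = (b : ℕ) := by
  unfold xbar
  have : (fun j => ((Fin.cons b x : Fin (k+1) → ℕ+) j : ℕ))
      = Fin.cons (b : ℕ) (fun j => ((x j : ℕ))) := by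
    funext j
    refine Fin.cases ?_ (fun i => ?_) j <;> simp
  rw [this, extFin_cons_zero]

lemma xbar_cons_succ (k : ℕ) (b : ℕ+) (x : Fin k → ℕ+) (r : ℕ) :
    xbar (k + 1) (Fin.cons b x) (r + 1) = xbar k x r := by
  unfold xbar
  have : (fun j => ((Fin.cons b x : Fin (k+1) → ℕ+) j : ℕ))
      = Fin.cons (b : ℕ) (fun j => ((x j : ℕ))) := by
    funext j
    refine Fin.cases ?_ (fun i => ?_) j <;> simp
  rw [this, extFin_cons_succ]

lemma prevx_cons (k : ℕ) (m : ℕ) (b : ℕ+) (x : Fin k → ℕ+) (r : ℕ) :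
    prevx m (xbar (k + 1) (Fin.cons b x)) (r + 1) = prevx (b : ℕ) (xbar k x) r := by
  unfold prevx
  rw [if_neg (Nat.succ_ne_zero r)]
  cases r with
  | zero => simpa using xbar_cons_zero k b x
  | succ s =>
      rw [if_neg (Nat.succ_ne_zero s)]
      simpa using xbar_cons_succ k b x s

end POPBP

namespace POPBP

lemma prevx_zero (m : ℕ) (xs : ℕ → ℕ) : prevx m xs 0 = m := if_pos rfl

lemma tp_bounds (p : ℝ) (hp0 : 0 ≤ p) (hp1 : p ≤ 1) (u : ℕ → ℝ) (n : ℕ)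
    (hu : ∀ i ≤ n, 0 ≤ u i ∧ u i < 1) :
    ∀ i ≤ n, 0 ≤ tp p u i ∧ tp p u i ≤ 1 := by
  intro i hi
  obtain ⟨h0, h1⟩ := hu i hi
  unfold tp
  constructor
  · nlinarith
  · nlinarith

lemma S_bounds (p : ℝ) (hp0 : 0 ≤ p) (hp1 : p ≤ 1) (υ u : ℕ → ℝ) (n : ℕ)
    (hυ : ∀ i < n, 0 < υ i ∧ υ i < 1) (hu : ∀ i ≤ n, 0 ≤ u i ∧ u i < 1) :
    ∀ k, k ≤ n → 0 ≤ S p υ u n k ∧ S p υ u n k ≤ 1 := by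
  intro k
  induction k with
  | zero => intro _; simp [S]
  | succ k ih =>
    intro hk
    obtain ⟨hs0, hs1⟩ := ih (by omega)
    obtain ⟨ha0, ha1⟩ := hυ (n - k - 1) (by omega)
    obtain ⟨ht0, ht1⟩ := tp_bounds p hp0 hp1 u n hu (n - k) (by omega)
    have hts0 : 0 ≤ tp p u (n - k) * S p υ u n k := mul_nonneg ht0 hs0
    have hts1 : tp p u (n - k) * S p υ u n k ≤ 1 := mul_le_one₀ ht1 hs0 hs1
    have hkey : (1 - υ (n - k - 1)) * (tp p u (n - k) * S p υ u n k) ≤ 1 - υ (n - k - 1) :=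
      mul_le_of_le_one_right (by linarith) hts1
    have hD : 0 < 1 - (1 - υ (n - k - 1)) * tp p u (n - k) * S p υ u n k := by nlinarith
    rw [show S p υ u n (k + 1) = υ (n - k - 1) * tp p u (n - k) * S p υ u n k /
      (1 - (1 - υ (n - k - 1)) * tp p u (n - k) * S p υ u n k) from rfl]
    constructor
    · apply div_nonneg _ hD.le
      positivity
    · rw [div_le_one hD]
      nlinarith

lemma D_pos (p : ℝ) (hp0 : 0 ≤ p) (hp1 : p ≤ 1) (υ u : ℕ → ℝ) (n : ℕ)
    (hυ : ∀ i < n, 0 < υ i ∧ υ i < 1) (hu : ∀ i ≤ n, 0 ≤ u i ∧ u i < 1) :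
    ∀ k < n, 0 < 1 - (1 - υ (n - k - 1)) * tp p u (n - k) * S p υ u n k := by
  intro k hk
  obtain ⟨hs0, hs1⟩ := S_bounds p hp0 hp1 υ u n hυ hu k (by omega)
  obtain ⟨ha0, ha1⟩ := hυ (n - k - 1) (by omega)
  obtain ⟨ht0, ht1⟩ := tp_bounds p hp0 hp1 u n hu (n - k) (by omega)
  have hts0 : 0 ≤ tp p u (n - k) * S p υ u n k := mul_nonneg ht0 hs0
  have hts1 : tp p u (n - k) * S p υ u n k ≤ 1 := mul_le_one₀ ht1 hs0 hs1
  have hkey : (1 - υ (n - k - 1)) * (tp p u (n - k) * S p υ u n k) ≤ 1 - υ (n - k - 1) :=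
    mul_le_of_le_one_right (by linarith) hts1
  nlinarith

lemma step_nonneg (p : ℝ) (hp0 : 0 ≤ p) (hp1 : p ≤ 1) (υ u : ℕ → ℝ) (n : ℕ)
    (hυ : ∀ i < n, 0 < υ i ∧ υ i < 1) (hu : ∀ i ≤ n, 0 ≤ u i ∧ u i < 1) :
    ∀ i < n, ∀ a b yv, 0 ≤ step p υ u i a b yv := by
  intro i hi a b yv
  have h1 := (hυ i hi).1.le
  have h2 : (0:ℝ) ≤ 1 - υ i := by linarith [(hυ i hi).2]
  have h3 := (hu (i + 1) (by omega)).1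
  have h5 : (0:ℝ) ≤ 1 - p := by linarith
  unfold step
  have i1 := ichoose_nonneg (b : ℤ) (yv : ℤ)
  have i2 := ichoose_nonneg ((b : ℤ) - 1) ((a : ℤ) - 1)
  exact mul_nonneg (mul_nonneg (mul_nonneg (mul_nonneg (mul_nonneg (mul_nonneg i1
    (pow_nonneg hp0 _)) (pow_nonneg h5 _)) i2) (pow_nonneg h1 _)) (pow_nonneg h2 _))
    (pow_nonneg h3 _)

end POPBP

namespace POPBP

lemma tail_eq (p : ℝ) (hp0 : 0 ≤ p) (hp1 : p ≤ 1) (υ u : ℕ → ℝ) (n : ℕ)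
    (hυ : ∀ i < n, 0 < υ i ∧ υ i < 1) (hu : ∀ i ≤ n, 0 ≤ u i ∧ u i < 1) :
    ∀ k, k ≤ n → ∀ m : ℕ, 1 ≤ m → tailE p υ u n k m = ENNReal.ofReal (S p υ u n k ^ m) := by
  have hstep := step_nonneg p hp0 hp1 υ u n hυ hu
  intro k
  induction k with
  | zero =>
    intro _ m hm
    rw [tailE]
    rw [tsum_eq_single (default) (fun b hb => absurd (Subsingleton.elim b default) hb)]
    simp [S]
  | succ k ih =>
    intro hk m hm
    obtain ⟨hs0, hs1⟩ := S_bounds p hp0 hp1 υ u n hυ hu k (by omega)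
    obtain ⟨ha0, ha1⟩ := hυ (n - k - 1) (by omega)
    obtain ⟨ht0, ht1⟩ := tp_bounds p hp0 hp1 u n hu (n - k) (by omega)
    have hD := D_pos p hp0 hp1 υ u n hυ hu k (by omega)
    have key : ∀ (b : ℕ+) (yv : ℕ) (x : Fin k → ℕ+) (y : Fin k → ℕ),
        (∏ r ∈ Finset.range (k + 1),
          step p υ u (n - (k + 1) + r)
            (prevx m (xbar (k + 1) (Fin.cons b x)) r)
            (xbar (k + 1) (Fin.cons b x) r)
            (extFin (k + 1) (Fin.cons yv y) 0 r))
        = step p υ u (n - k - 1) m (b : ℕ) yv *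
          ∏ r ∈ Finset.range k,
            step p υ u (n - k + r) (prevx (b : ℕ) (xbar k x) r) (xbar k x r)
              (extFin k y 0 r) := by
      intro b yv x y
      rw [Finset.prod_range_succ', mul_comm]
      congr 1
      · refine Finset.prod_congr rfl fun r hr => ?_
        rw [Finset.mem_range] at hr
        rw [show n - (k + 1) + (r + 1) = n - k + r by omega, prevx_cons, xbar_cons_succ,
          extFin_cons_succ]
    calc tailE p υ u n (k + 1) m
        = ∑' z : (ℕ+ × ℕ) × ((Fin k → ℕ+) × (Fin k → ℕ)),
            ENNReal.ofReal (step p υ u (n - k - 1) m (z.1.1 : ℕ) z.1.2 *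
              ∏ r ∈ Finset.range k,
                step p υ u (n - k + r) (prevx (z.1.1 : ℕ) (xbar k z.2.1) r) (xbar k z.2.1 r)
                  (extFin k z.2.2 0 r)) := by
          rw [tailE, ← Equiv.tsum_eq (splitEquiv k)]
          refine tsum_congr fun z => ?_
          obtain ⟨⟨b, yv⟩, ⟨x, y⟩⟩ := z
          simp only [splitEquiv, Equiv.coe_fn_mk]
          rw [key]
      _ = ∑' bv : ℕ+ × ℕ,
            ENNReal.ofReal (step p υ u (n - k - 1) m (bv.1 : ℕ) bv.2 * S p υ u n k ^ (bv.1 : ℕ)) := by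
          rw [ENNReal.tsum_prod']
          refine tsum_congr fun bv => ?_
          have hc : 0 ≤ step p υ u (n - k - 1) m (bv.1 : ℕ) bv.2 := hstep _ (by omega) _ _ _
          have h1 : ∀ w : (Fin k → ℕ+) × (Fin k → ℕ),
              ENNReal.ofReal (step p υ u (n - k - 1) m (bv.1 : ℕ) bv.2 *
                ∏ r ∈ Finset.range k,
                  step p υ u (n - k + r) (prevx (bv.1 : ℕ) (xbar k w.1) r) (xbar k w.1 r)
                    (extFin k w.2 0 r))
              = ENNReal.ofReal (step p υ u (n - k - 1) m (bv.1 : ℕ) bv.2) *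
                ENNReal.ofReal (∏ r ∈ Finset.range k,
                  step p υ u (n - k + r) (prevx (bv.1 : ℕ) (xbar k w.1) r) (xbar k w.1 r)
                    (extFin k w.2 0 r)) := fun w => ENNReal.ofReal_mul hc
          rw [tsum_congr h1, ENNReal.tsum_mul_left]
          have h2 : (∑' w : (Fin k → ℕ+) × (Fin k → ℕ),
              ENNReal.ofReal (∏ r ∈ Finset.range k,
                step p υ u (n - k + r) (prevx (bv.1 : ℕ) (xbar k w.1) r) (xbar k w.1 r)
                  (extFin k w.2 0 r))) = tailE p υ u n k (bv.1 : ℕ) := rfl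
          rw [h2, ih (by omega) (bv.1 : ℕ) bv.1.property, ← ENNReal.ofReal_mul hc]
      _ = ∑' b : ℕ+, ∑' yv : ℕ,
            ENNReal.ofReal (step p υ u (n - k - 1) m (b : ℕ) yv * S p υ u n k ^ (b : ℕ)) :=
          ENNReal.tsum_prod'
      _ = ∑' b : ℕ+,
            ENNReal.ofReal (ichoose (((b : ℕ) : ℤ) - 1) ((m : ℤ) - 1) *
              (tp p u (n - k) * S p υ u n k) ^ (b : ℕ) *
              (1 - υ (n - k - 1)) ^ ((b : ℕ) - m) * υ (n - k - 1) ^ m) := by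
          refine tsum_congr fun b => ?_
          set C : ℝ := ichoose (((b : ℕ) : ℤ) - 1) ((m : ℤ) - 1) * υ (n - k - 1) ^ m *
            (1 - υ (n - k - 1)) ^ ((b : ℕ) - m) * S p υ u n k ^ (b : ℕ) with hC
          have hbin := (hasSum_binom (b : ℕ) (p * u (n - k - 1 + 1)) (1 - p)).mul_left C
          have heq : (fun yv : ℕ => C * (ichoose ((b : ℕ) : ℤ) (yv : ℤ) *
              (p * u (n - k - 1 + 1)) ^ yv * (1 - p) ^ ((b : ℕ) - yv)))
              = fun yv : ℕ => step p υ u (n - k - 1) m (b : ℕ) yv * S p υ u n k ^ (b : ℕ) := by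
            funext yv
            rw [hC]
            unfold step
            rw [mul_pow]
            ring
          rw [heq] at hbin
          have hnn : ∀ yv : ℕ, 0 ≤ step p υ u (n - k - 1) m (b : ℕ) yv *
              S p υ u n k ^ (b : ℕ) :=
            fun yv => mul_nonneg (hstep _ (by omega) _ _ _) (pow_nonneg hs0 _)
          rw [← ENNReal.ofReal_tsum_of_nonneg hnn hbin.summable, hbin.tsum_eq]
          congr 1
          rw [hC]
          have htpe : p * u (n - k - 1 + 1) + (1 - p) = tp p u (n - k) := by
            unfold tp
            rw [show n - k - 1 + 1 = n - k by omega]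
          rw [htpe, mul_pow]
          ring
      _ = ∑' j : ℕ,
            ENNReal.ofReal (ichoose (((j + 1 : ℕ) : ℤ) - 1) ((m : ℤ) - 1) *
              (tp p u (n - k) * S p υ u n k) ^ (j + 1) *
              (1 - υ (n - k - 1)) ^ ((j + 1) - m) * υ (n - k - 1) ^ m) := by
          rw [← Equiv.tsum_eq Equiv.pnatEquivNat.symm]
          refine tsum_congr fun j => ?_
          have : ((Equiv.pnatEquivNat.symm j : ℕ+) : ℕ) = j + 1 := by
            simp [Equiv.pnatEquivNat]
          rw [this]
      _ = ENNReal.ofReal (S p υ u n (k + 1) ^ m) := by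
          set c : ℝ := tp p u (n - k) * S p υ u n k with hc
          set β : ℝ := 1 - υ (n - k - 1) with hβ
          have hc0 : 0 ≤ c := mul_nonneg ht0 hs0
          have hc1 : c ≤ 1 := mul_le_one₀ ht1 hs0 hs1
          have hβ0 : 0 ≤ β := by rw [hβ]; linarith
          have hβc : β * c < 1 := by
            have h1 : β * c ≤ β := mul_le_of_le_one_right hβ0 hc1
            have h2 : β < 1 := by rw [hβ]; linarith
            linarith
          have hneg := (hasSum_negbinom m hm hβ0 hc0 hβc).mul_right (υ (n - k - 1) ^ m)
          set f : ℕ → ℝ := fun b : ℕ => ichoose ((b : ℤ) - 1) ((m : ℤ) - 1) * c ^ b *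
            β ^ (b - m) * υ (n - k - 1) ^ m with hf
          have hf0 : f 0 = 0 := by
            rw [hf]
            simp only []
            rw [ichoose_vanish 0 m (by omega)]
            ring
          have hsh : HasSum (fun j : ℕ => f (j + 1))
              ((c / (1 - β * c)) ^ m * υ (n - k - 1) ^ m) := by
            refine (hasSum_nat_add_iff (f := f) 1).mpr ?_
            rw [Finset.sum_range_one, hf0, add_zero]
            exact hneg
          have hnn : ∀ j : ℕ, 0 ≤ f (j + 1) := by
            intro j
            rw [hf]
            have hi := ichoose_nonneg (((j + 1 : ℕ) : ℤ) - 1) ((m : ℤ) - 1)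
            exact mul_nonneg (mul_nonneg (mul_nonneg hi (pow_nonneg hc0 _))
              (pow_nonneg hβ0 _)) (pow_nonneg ha0.le _)
          rw [← ENNReal.ofReal_tsum_of_nonneg hnn hsh.summable, hsh.tsum_eq]
          congr 1
          rw [show S p υ u n (k + 1) = υ (n - k - 1) * tp p u (n - k) * S p υ u n k /
            (1 - (1 - υ (n - k - 1)) * tp p u (n - k) * S p υ u n k) from rfl]
          rw [← mul_pow]
          congr 1
          rw [hc, hβ]
          rw [show (1 - υ (n - k - 1)) * (tp p u (n - k) * S p υ u n k)
            = (1 - υ (n - k - 1)) * tp p u (n - k) * S p υ u n k from (mul_assoc _ _ _).symm]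
          rw [div_mul_eq_mul_div]
          congr 1
          ring

end POPBP

namespace POPBP

lemma Q_bounds (p : ℝ) (hp0 : 0 ≤ p) (hp1 : p ≤ 1) (υ u : ℕ → ℝ) (n : ℕ) (hn : 1 ≤ n)
    (hυ : ∀ i < n, 0 < υ i ∧ υ i < 1) (hυn : υ n = 1) (hu : ∀ i ≤ n, 0 ≤ u i ∧ u i < 1) :
    ∀ k ≤ n, 0 ≤ Qeval p υ u k ∧ Qeval p υ u k < 1 := by
  intro k
  induction k with
  | zero =>
    intro _
    obtain ⟨ha0, ha1⟩ := hυ 0 (by omega)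
    obtain ⟨hu0, hu1⟩ := hu 0 (by omega)
    constructor
    · show 0 ≤ (1 - υ 0) + υ 0 * u 0
      nlinarith
    · show (1 - υ 0) + υ 0 * u 0 < 1
      nlinarith
  | succ k ih =>
    intro hk
    obtain ⟨hq0, hq1⟩ := ih (by omega)
    have hυk : 0 < υ (k + 1) ∧ υ (k + 1) ≤ 1 := by
      rcases eq_or_lt_of_le hk with h | h
      · rw [h, hυn]; exact ⟨one_pos, le_refl 1⟩
      · exact ⟨(hυ _ h).1, (hυ _ h).2.le⟩
    obtain ⟨ht0, ht1⟩ := tp_bounds p hp0 hp1 u n hu (k + 1) hk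
    have htq : tp p u (k + 1) * Qeval p υ u k ≤ Qeval p υ u k :=
      mul_le_of_le_one_left hq0 ht1
    have htq0 : 0 ≤ tp p u (k + 1) * Qeval p υ u k := mul_nonneg ht0 hq0
    have h2 : υ (k + 1) * (tp p u (k + 1) * Qeval p υ u k) < υ (k + 1) * 1 :=
      mul_lt_mul_of_pos_left (lt_of_le_of_lt htq hq1) hυk.1
    have h3 : 0 ≤ υ (k + 1) * (tp p u (k + 1) * Qeval p υ u k) :=
      mul_nonneg hυk.1.le htq0
    have hQdef : Qeval p υ u (k + 1)
        = (1 - υ (k + 1)) + υ (k + 1) * tp p u (k + 1) * Qeval p υ u k := rfl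
    rw [hQdef]
    constructor
    · nlinarith
    · nlinarith

lemma BQ (p : ℝ) (υ u : ℕ → ℝ) :
    ∀ k, Qeval p υ u k = (1 - υ k) + υ k * B p υ u k := by
  intro k
  induction k with
  | zero => rfl
  | succ k ih =>
    have h1 : Qeval p υ u (k + 1)
        = (1 - υ (k + 1)) + υ (k + 1) * tp p u (k + 1) * Qeval p υ u k := rfl
    have h2 : B p υ u (k + 1) = tp p u (k + 1) * ((1 - υ k) + υ k * B p υ u k) := rfl
    rw [h1, h2, ih]
    ring

lemma QB (p : ℝ) (υ u : ℕ → ℝ) (n : ℕ) (hn : 1 ≤ n) (hυn : υ n = 1) :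
    Qeval p υ u n = B p υ u n := by
  obtain ⟨i, rfl⟩ : ∃ i, n = i + 1 := ⟨n - 1, by omega⟩
  have h1 : Qeval p υ u (i + 1)
      = (1 - υ (i + 1)) + υ (i + 1) * tp p u (i + 1) * Qeval p υ u i := rfl
  have h2 : B p υ u (i + 1) = tp p u (i + 1) * ((1 - υ i) + υ i * B p υ u i) := rfl
  rw [h1, h2, hυn, BQ p υ u i]
  ring

lemma inv_eq (p : ℝ) (hp0 : 0 ≤ p) (hp1 : p ≤ 1) (υ u : ℕ → ℝ) (n : ℕ) (hn : 1 ≤ n)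
    (hυ : ∀ i < n, 0 < υ i ∧ υ i < 1) (hυn : υ n = 1) (hu : ∀ i ≤ n, 0 ≤ u i ∧ u i < 1) :
    ∀ j ≤ n, 1 - Qeval p υ u n =
      (∏ r ∈ Finset.range j, (1 - (1 - υ (n - r - 1)) * tp p u (n - r) * S p υ u n r)) *
        (1 - S p υ u n j * B p υ u (n - j)) := by
  intro j
  induction j with
  | zero =>
    intro _
    rw [QB p υ u n hn hυn]
    simp [S]
  | succ j ih =>
    intro hj
    have hjn : j < n := hj
    have hD := D_pos p hp0 hp1 υ u n hυ hu j hjn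
    have hSsucc : S p υ u n (j + 1) * (1 - (1 - υ (n - j - 1)) * tp p u (n - j) * S p υ u n j)
        = υ (n - j - 1) * tp p u (n - j) * S p υ u n j := by
      rw [show S p υ u n (j + 1) = υ (n - j - 1) * tp p u (n - j) * S p υ u n j /
        (1 - (1 - υ (n - j - 1)) * tp p u (n - j) * S p υ u n j) from rfl]
      exact div_mul_cancel₀ _ hD.ne'
    have hBexp : B p υ u (n - j) = tp p u (n - j) *
        ((1 - υ (n - j - 1)) + υ (n - j - 1) * B p υ u (n - j - 1)) := by
      obtain ⟨i, hi⟩ : ∃ i, n - j = i + 1 := ⟨n - j - 1, by omega⟩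
      rw [hi]
      simp only [Nat.add_sub_cancel]
      rfl
    rw [Finset.prod_range_succ, mul_assoc, ih (by omega)]
    congr 1
    rw [show n - (j + 1) = n - j - 1 by omega]
    linear_combination (B p υ u (n - j - 1)) * hSsucc - (S p υ u n j) * hBexp

lemma ps_eq (p : ℝ) (hp0 : 0 ≤ p) (hp1 : p ≤ 1) (υ u : ℕ → ℝ) (n : ℕ)
    (hυ : ∀ i < n, 0 < υ i ∧ υ i < 1) (hu : ∀ i ≤ n, 0 ≤ u i ∧ u i < 1) :
    ∀ j ≤ n, S p υ u n j *
        (∏ r ∈ Finset.range j, (1 - (1 - υ (n - r - 1)) * tp p u (n - r) * S p υ u n r))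
      = ∏ r ∈ Finset.range j, (υ (n - r - 1) * tp p u (n - r)) := by
  intro j
  induction j with
  | zero => intro _; simp [S]
  | succ j ih =>
    intro hj
    have hjn : j < n := hj
    have hD := D_pos p hp0 hp1 υ u n hυ hu j hjn
    have hSsucc : S p υ u n (j + 1) * (1 - (1 - υ (n - j - 1)) * tp p u (n - j) * S p υ u n j)
        = υ (n - j - 1) * tp p u (n - j) * S p υ u n j := by
      rw [show S p υ u n (j + 1) = υ (n - j - 1) * tp p u (n - j) * S p υ u n j /
        (1 - (1 - υ (n - j - 1)) * tp p u (n - j) * S p υ u n j) from rfl]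
      exact div_mul_cancel₀ _ hD.ne'
    rw [Finset.prod_range_succ, Finset.prod_range_succ, ← ih (by omega)]
    linear_combination
      (∏ r ∈ Finset.range j, (1 - (1 - υ (n - r - 1)) * tp p u (n - r) * S p υ u n r)) * hSsucc

end POPBP

open POPBP

/-- For `n ≥ 1`, `p ∈ [0,1]`, `υ_0, …, υ_{n-1} ∈ (0,1)` (with `υ_n = 1`)
and `u_0, …, u_n ∈ [0,1)`, one has `0 ≤ Q_n < 1`, the generating-function series of the POPBP
likelihood converges, and its sum equals
`u_0 υ_0 ⋯ υ_{n-1} (p u_1 + q) ⋯ (p u_n + q) / (1 - Q_n)`. -/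
theorem popbp_generating_function
    (n : ℕ) (hn : 1 ≤ n) (p : ℝ) (hp : p ∈ Set.Icc (0 : ℝ) 1)
    (υ : ℕ → ℝ) (hυ : ∀ i < n, υ i ∈ Set.Ioo (0 : ℝ) 1) (hυn : υ n = 1)
    (u : ℕ → ℝ) (hu : ∀ i ≤ n, u i ∈ Set.Ico (0 : ℝ) 1) :
    (0 ≤ Qeval p υ u n ∧ Qeval p υ u n < 1) ∧
    Summable (fun z : ℕ+ × (Fin n → ℕ) =>
      popbpL n p υ (z.1 : ℕ) z.2 * u 0 ^ (z.1 : ℕ) * ∏ i : Fin n, u ((i : ℕ) + 1) ^ (z.2 i)) ∧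
    (∑' z : ℕ+ × (Fin n → ℕ),
        popbpL n p υ (z.1 : ℕ) z.2 * u 0 ^ (z.1 : ℕ) * ∏ i : Fin n, u ((i : ℕ) + 1) ^ (z.2 i)) =
      u 0 * (∏ i ∈ Finset.range n, υ i) * (∏ i ∈ Finset.range n, (p * u (i + 1) + (1 - p))) /
        (1 - Qeval p υ u n) := by
  obtain ⟨hp0, hp1⟩ := hp
  have hυ' : ∀ i < n, 0 < υ i ∧ υ i < 1 := fun i hi => ⟨(hυ i hi).1, (hυ i hi).2⟩
  have hu' : ∀ i ≤ n, 0 ≤ u i ∧ u i < 1 := fun i hi => ⟨(hu i hi).1, (hu i hi).2⟩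
  have hQ := Q_bounds p hp0 hp1 υ u n hn hυ' hυn hu' n le_rfl
  obtain ⟨hS0, hS1⟩ := S_bounds p hp0 hp1 υ u n hυ' hu' n le_rfl
  obtain ⟨hu00, hu01⟩ := hu' 0 (by omega)
  have hw0 : 0 ≤ u 0 * S p υ u n n := mul_nonneg hu00 hS0
  have hw1 : u 0 * S p υ u n n < 1 := by nlinarith
  refine ⟨hQ, ?_⟩
  -- the term with all variables
  set T : ℕ+ × (Fin n → ℕ) → (Fin n → ℕ+) → ℝ := fun z x =>
    popbpTerm n p υ (z.1 : ℕ) (extFin n z.2 0) (xbar n x) *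
      (u 0 ^ (z.1 : ℕ) * ∏ i : Fin n, u ((i : ℕ) + 1) ^ (z.2 i)) with hT
  have hTnn : ∀ z x, 0 ≤ T z x := by
    intro z x
    rw [hT]
    apply mul_nonneg
    · apply Finset.prod_nonneg
      intro i hi
      rw [Finset.mem_range] at hi
      have h1 := (hυ' i hi).1.le
      have h2 : (0:ℝ) ≤ 1 - υ i := by linarith [(hυ' i hi).2]
      have h5 : (0:ℝ) ≤ 1 - p := by linarith
      exact mul_nonneg (mul_nonneg (mul_nonneg (mul_nonneg (mul_nonneg
        (ichoose_nonneg _ _) (pow_nonneg hp0 _)) (pow_nonneg h5 _)) (ichoose_nonneg _ _))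
        (pow_nonneg h1 _)) (pow_nonneg h2 _)
    · apply mul_nonneg (pow_nonneg hu00 _)
      apply Finset.prod_nonneg
      intro i _
      exact pow_nonneg (hu' ((i : ℕ) + 1) i.isLt).1 _
  set G : ℕ+ × (Fin n → ℕ) → ℝ≥0∞ := fun z => ∑' x : Fin n → ℕ+, ENNReal.ofReal (T z x)
    with hG
  -- pointwise identity with the chain term
  have hprod : ∀ (x0 : ℕ+) (y : Fin n → ℕ) (x : Fin n → ℕ+),
      T (x0, y) x = u 0 ^ ((x0 : ℕ)) *
        ∏ r ∈ Finset.range n, step p υ u (n - n + r) (prevx (x0 : ℕ) (xbar n x) r)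
          (xbar n x r) (extFin n y 0 r) := by
    intro x0 y x
    have h1 : ∀ r ∈ Finset.range n, step p υ u (n - n + r) (prevx (x0 : ℕ) (xbar n x) r)
          (xbar n x r) (extFin n y 0 r)
        = (ichoose (xbar n x r) (extFin n y 0 r) * p ^ (extFin n y 0 r) *
            (1 - p) ^ (xbar n x r - extFin n y 0 r) *
            ichoose ((xbar n x r : ℤ) - 1) ((prevx (x0 : ℕ) (xbar n x) r : ℤ) - 1) *
            υ r ^ (prevx (x0 : ℕ) (xbar n x) r) *
            (1 - υ r) ^ (xbar n x r - prevx (x0 : ℕ) (xbar n x) r)) *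
          u (r + 1) ^ (extFin n y 0 r) := by
      intro r _
      rw [show n - n + r = r by omega]
      rfl
    rw [Finset.prod_congr rfl h1, Finset.prod_mul_distrib]
    have h2 : ∏ r ∈ Finset.range n, u (r + 1) ^ (extFin n y 0 r)
        = ∏ i : Fin n, u ((i : ℕ) + 1) ^ (y i) := by
      rw [Finset.prod_range (fun r => u (r + 1) ^ (extFin n y 0 r))]
      refine Finset.prod_congr rfl fun i _ => ?_
      congr 1
      unfold extFin
      rw [dif_pos i.isLt]
    rw [h2, hT]
    show popbpTerm n p υ (x0 : ℕ) (extFin n y 0) (xbar n x) * _ = _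
    rw [popbpTerm]
    ring
  have hz : ∀ x0 : ℕ+,
      (∑' w : (Fin n → ℕ+) × (Fin n → ℕ), ENNReal.ofReal (T (x0, w.2) w.1))
        = ENNReal.ofReal ((u 0 * S p υ u n n) ^ (x0 : ℕ)) := by
    intro x0
    have h1 : ∀ w : (Fin n → ℕ+) × (Fin n → ℕ),
        ENNReal.ofReal (T (x0, w.2) w.1)
          = ENNReal.ofReal (u 0 ^ ((x0 : ℕ))) * ENNReal.ofReal
              (∏ r ∈ Finset.range n, step p υ u (n - n + r) (prevx (x0 : ℕ) (xbar n w.1) r)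
                (xbar n w.1 r) (extFin n w.2 0 r)) := by
      intro w
      rw [hprod x0 w.2 w.1, ENNReal.ofReal_mul (pow_nonneg hu00 _)]
    rw [tsum_congr h1, ENNReal.tsum_mul_left]
    have h2 : (∑' w : (Fin n → ℕ+) × (Fin n → ℕ),
        ENNReal.ofReal (∏ r ∈ Finset.range n, step p υ u (n - n + r)
          (prevx (x0 : ℕ) (xbar n w.1) r) (xbar n w.1 r) (extFin n w.2 0 r)))
        = tailE p υ u n n (x0 : ℕ) := rfl
    rw [h2, tail_eq p hp0 hp1 υ u n hυ' hu' n le_rfl (x0 : ℕ) x0.property,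
      ← ENNReal.ofReal_mul (pow_nonneg hu00 _), ← mul_pow]
  have htot : ∑' z : ℕ+ × (Fin n → ℕ), G z
      = ENNReal.ofReal (u 0 * S p υ u n n / (1 - u 0 * S p υ u n n)) := by
    rw [ENNReal.tsum_prod']
    have h1 : ∀ x0 : ℕ+, (∑' y : Fin n → ℕ, G (x0, y))
        = ENNReal.ofReal ((u 0 * S p υ u n n) ^ (x0 : ℕ)) := by
      intro x0
      rw [← hz x0, ENNReal.tsum_prod']
      rw [ENNReal.tsum_comm]
    rw [tsum_congr h1, ← Equiv.tsum_eq Equiv.pnatEquivNat.symm]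
    have h3 : ∀ j : ℕ, ENNReal.ofReal ((u 0 * S p υ u n n) ^
        ((Equiv.pnatEquivNat.symm j : ℕ+) : ℕ))
        = ENNReal.ofReal ((u 0 * S p υ u n n) ^ (j + 1)) := by
      intro j
      congr 2
    rw [tsum_congr h3]
    have hgeo := hasSum_geom_succ hw0 hw1
    rw [← ENNReal.ofReal_tsum_of_nonneg (fun j => pow_nonneg hw0 _) hgeo.summable,
      hgeo.tsum_eq]
  have hfin : ∑' z : ℕ+ × (Fin n → ℕ), G z ≠ ⊤ := by
    rw [htot]; exact ENNReal.ofReal_ne_top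
  have hGne : ∀ z, G z ≠ ⊤ := fun z => ne_top_of_le_ne_top hfin (ENNReal.le_tsum z)
  have hfeq : ∀ z : ℕ+ × (Fin n → ℕ),
      popbpL n p υ (z.1 : ℕ) z.2 * u 0 ^ (z.1 : ℕ) * ∏ i : Fin n, u ((i : ℕ) + 1) ^ (z.2 i)
        = (G z).toReal := by
    intro z
    have h1 : popbpL n p υ (z.1 : ℕ) z.2 * u 0 ^ (z.1 : ℕ) *
        ∏ i : Fin n, u ((i : ℕ) + 1) ^ (z.2 i) = ∑' x : Fin n → ℕ+, T z x := by
      rw [hT, popbpL, mul_assoc, ← tsum_mul_right]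
    rw [h1]
    have h2 : ∀ x : Fin n → ℕ+, T z x = (ENNReal.ofReal (T z x)).toReal :=
      fun x => (ENNReal.toReal_ofReal (hTnn z x)).symm
    rw [tsum_congr h2, ← ENNReal.tsum_toReal_eq (fun x => ENNReal.ofReal_ne_top)]
  constructor
  · exact (ENNReal.summable_toReal hfin).congr fun z => (hfeq z).symm
  · rw [tsum_congr hfeq, ← ENNReal.tsum_toReal_eq hGne, htot,
      ENNReal.toReal_ofReal (div_nonneg hw0 (by linarith))]
    -- final algebra
    have hInv := inv_eq p hp0 hp1 υ u n hn hυ' hυn hu' n le_rfl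
    have hPS := ps_eq p hp0 hp1 υ u n hυ' hu' n le_rfl
    have hPd : 0 < ∏ r ∈ Finset.range n,
        (1 - (1 - υ (n - r - 1)) * tp p u (n - r) * S p υ u n r) := by
      apply Finset.prod_pos
      intro r hr
      rw [Finset.mem_range] at hr
      exact D_pos p hp0 hp1 υ u n hυ' hu' r hr
    have hrefl : ∏ r ∈ Finset.range n, (υ (n - r - 1) * tp p u (n - r))
        = (∏ i ∈ Finset.range n, υ i) * ∏ i ∈ Finset.range n, tp p u (i + 1) := by
      rw [Finset.prod_mul_distrib]
      congr 1
      · rw [← Finset.prod_range_reflect (fun i => υ i) n]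
        exact Finset.prod_congr rfl fun r hr => by rw [show n - r - 1 = n - 1 - r by omega]
      · rw [← Finset.prod_range_reflect (fun i => tp p u (i + 1)) n]
        refine Finset.prod_congr rfl fun r hr => ?_
        rw [Finset.mem_range] at hr
        rw [show n - r = n - 1 - r + 1 by omega]
    have hQn1 : 1 - Qeval p υ u n
        = (∏ r ∈ Finset.range n,
            (1 - (1 - υ (n - r - 1)) * tp p u (n - r) * S p υ u n r)) *
          (1 - u 0 * S p υ u n n) := by
      rw [hInv, Nat.sub_self]
      have : B p υ u 0 = u 0 := rfl
      rw [this, mul_comm (S p υ u n n) (u 0)]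
    have hstmt : ∏ i ∈ Finset.range n, (p * u (i + 1) + (1 - p))
        = ∏ i ∈ Finset.range n, tp p u (i + 1) := rfl
    rw [hstmt]
    rw [div_eq_div_iff (by linarith : (0:ℝ) < 1 - u 0 * S p υ u n n).ne'
      (by rw [hQn1]; exact (mul_pos hPd (by linarith)).ne' : 1 - Qeval p υ u n ≠ 0)]
    rw [hQn1]
    have hnum : u 0 * (∏ i ∈ Finset.range n, υ i) * (∏ i ∈ Finset.range n, tp p u (i + 1))
        = u 0 * (S p υ u n n * ∏ r ∈ Finset.range n,
            (1 - (1 - υ (n - r - 1)) * tp p u (n - r) * S p υ u n r)) := by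
      rw [hPS, hrefl]
      ring
    rw [hnum]
    ring
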